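/- Let N ≥ 1 and ε ∈ (0,1]. Let x̂, ŵ ∈ ℝ^N, set v̂ = x̂ + ŵ, and assume 2‖ŵ‖₂ ≤ ε·|x̂[i]| for every i ∈ supp(x̂). Then for every i ∈ supp(x̂): (1−ε)|x̂[i]| ≤ |v̂[i]| ≤ (1+ε)|x̂[i]| and (1−ε)|v̂[i]| ≤ |x̂[i]| ≤ (1+ε)|v̂[i]|. Moreover, for every real v and every C ≥ 0: if |v − v̂[i]| ≤ Cε·|v̂[i]| then |v − x̂[i]| ≤ 2ε(C+1)·|x̂[i]|. -/
import Mathlib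


/-- Converting accuracy with respect to the noisy vector `v̂ = x̂ + ŵ` into
accuracy with respect to the sparse vector `x̂` at the spike positions. -/
theorem stmt_6 (N : ℕ) (hN : 1 ≤ N) (ε : ℝ) (hε : 0 < ε) (hε1 : ε ≤ 1)
    (xhat what : Fin N → ℝ)
    (hnoise : ∀ i, xhat i ≠ 0 → 2 * Real.sqrt (∑ j, what j ^ 2) ≤ ε * |xhat i|)
    (i : Fin N) (hi : xhat i ≠ 0) :
    ((1 - ε) * |xhat i| ≤ |xhat i + what i| ∧ |xhat i + what i| ≤ (1 + ε) * |xhat i|) ∧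
    ((1 - ε) * |xhat i + what i| ≤ |xhat i| ∧ |xhat i| ≤ (1 + ε) * |xhat i + what i|) ∧
    (∀ v C : ℝ, 0 ≤ C → |v - (xhat i + what i)| ≤ C * ε * |xhat i + what i| →
      |v - xhat i| ≤ 2 * ε * (C + 1) * |xhat i|) := by
  have hwle : |what i| ≤ Real.sqrt (∑ j, what j ^ 2) := by
    rw [← Real.sqrt_sq_eq_abs]
    apply Real.sqrt_le_sqrt
    exact Finset.single_le_sum (fun j _ => sq_nonneg (what j)) (Finset.mem_univ i)
  have hkey : 2 * |what i| ≤ ε * |xhat i| :=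
    le_trans (by linarith) (hnoise i hi)
  have hxa : 0 < |xhat i| := abs_pos.mpr hi
  have h1 : |xhat i + what i| ≤ |xhat i| + |what i| := abs_add_le _ _
  have h2 : |xhat i| - |what i| ≤ |xhat i + what i| := by
    have := abs_sub_abs_le_abs_sub (xhat i) (-(what i))
    simp only [sub_neg_eq_add, abs_neg] at this
    linarith
  refine ⟨⟨by nlinarith, by nlinarith⟩, ⟨by nlinarith, by nlinarith⟩, ?_⟩
  intro v C hC hv
  have h3 : |v - xhat i| ≤ |v - (xhat i + what i)| + |what i| := by
    have := abs_add_le (v - (xhat i + what i)) (what i)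
    have e : v - (xhat i + what i) + what i = v - xhat i := by ring
    rw [e] at this
    exact this
  have hva : |xhat i + what i| ≤ (1 + ε) * |xhat i| := by nlinarith
  nlinarith [mul_nonneg hC hε.le, mul_nonneg (mul_nonneg hC hε.le) hxa.le,
    mul_le_mul_of_nonneg_left hva (mul_nonneg hC hε.le)]
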